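/- Let ρ be a fully separable state on ℂ^{d_{A_1}} ⊗ ⋯ ⊗ ℂ^{d_{A_n}}, and for each q let {E^{A_q}_{α,k}} be an informationally complete (N_{A_q},M_{A_q})-POVM on ℂ^{d_{A_q}} with efficiency parameter x_{A_q}. Then Σ_{α_1,…,α_n} Σ_{k_1,…,k_n} ( tr((E^{A_1}_{α_1,k_1} ⊗ E^{A_2}_{α_2,k_2} ⊗ ⋯ ⊗ E^{A_n}_{α_n,k_n}) ρ) )² ≤ ∏_{i=1}^{n} ((d_{A_i}−1)/d_{A_i}) · (d_{A_i}² + M_{A_i}² x_{A_i})/(M_{A_i}(M_{A_i}−1)). -/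

import Mathlib

open scoped BigOperators ComplexOrder
open Matrix

noncomputable def traceNorm {m n : Type*} [Fintype m] [Fintype n] [DecidableEq n]
    (X : Matrix m n ℂ) : ℝ :=
  (let hA := (Matrix.posSemidef_conjTranspose_mul_self X).1
   (hA.eigenvectorUnitary : Matrix n n ℂ) * diagonal (fun i => ((Real.sqrt (hA.eigenvalues i) : ℝ) : ℂ)) *
     (star (hA.eigenvectorUnitary : Matrix n n ℂ))).trace.re

def IsDensityMatrix {ι : Type*} [Fintype ι] (ρ : Matrix ι ι ℂ) : Prop :=
  ρ.PosSemidef ∧ ρ.trace = 1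

def IsNMPOVM (d N M : ℕ) (x : ℝ)
    (E : Fin N → Fin M → Matrix (Fin d) (Fin d) ℂ) : Prop :=
  (∀ α k, (E α k).PosSemidef) ∧
  (∀ α, ∑ k, E α k = 1) ∧
  (∀ α k, (E α k).trace = (((d : ℝ) / M : ℝ) : ℂ)) ∧
  (∀ α k, (E α k * E α k).trace = (x : ℂ)) ∧
  (∀ α k l, k ≠ l → (E α k * E α l).trace =
      ((((d : ℝ) - M * x) / (M * ((M : ℝ) - 1)) : ℝ) : ℂ)) ∧
  (∀ α β k l, α ≠ β → (E α k * E β l).trace = (((d : ℝ) / M ^ 2 : ℝ) : ℂ)) ∧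
  ((d : ℝ) / M ^ 2 < x ∧ x ≤ min ((d : ℝ) ^ 2 / M ^ 2) ((d : ℝ) / M))

def IsInfoComplete (d N M : ℕ) : Prop := ((M : ℝ) - 1) * N = (d : ℝ) ^ 2 - 1
/-- Tensor (Kronecker) product of a family of matrices, one per subsystem. -/
def famKron {nn : ℕ} {d : Fin nn → ℕ}
    (A : ∀ i, Matrix (Fin (d i)) (Fin (d i)) ℂ) :
    Matrix (∀ i, Fin (d i)) (∀ i, Fin (d i)) ℂ :=
  Matrix.of fun f g => ∏ i, A i (f i) (g i)

/-- An n-partite state is fully separable if it is a finite convex combination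
of tensor products of local density matrices. -/
def FullySeparable {nn : ℕ} {d : Fin nn → ℕ}
    (ρ : Matrix (∀ i, Fin (d i)) (∀ i, Fin (d i)) ℂ) : Prop :=
  ∃ (K : ℕ) (p : Fin K → ℝ)
    (ρs : Fin K → ∀ i, Matrix (Fin (d i)) (Fin (d i)) ℂ),
    (∀ j, 0 ≤ p j) ∧ (∑ j, p j = 1) ∧
    (∀ j i, IsDensityMatrix (ρs j i)) ∧
    ρ = ∑ j, (p j : ℂ) • famKron (ρs j)



/-- real cast smul preserves hermitian -/
lemma herm_smul_real {n : Type*} [Fintype n] (r : ℝ) {A : Matrix n n ℂ}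
    (hA : A.IsHermitian) : ((r : ℂ) • A).IsHermitian := by
  unfold Matrix.IsHermitian at *
  rw [Matrix.conjTranspose_smul, hA]
  simp [Complex.star_def, Complex.conj_ofReal]

lemma herm_sum {n : Type*} [Fintype n] {ι : Type*} (s : Finset ι)
    (f : ι → Matrix n n ℂ) (hf : ∀ i ∈ s, (f i).IsHermitian) :
    (∑ i ∈ s, f i).IsHermitian := by
  unfold Matrix.IsHermitian at *
  rw [Matrix.conjTranspose_sum]
  exact Finset.sum_congr rfl hf

/-- trace of product of two hermitian matrices is real -/
lemma trace_mul_herm_real {n : Type*} [Fintype n] {A B : Matrix n n ℂ}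
    (hA : A.IsHermitian) (hB : B.IsHermitian) :
    (A * B).trace = (((A * B).trace.re : ℝ) : ℂ) := by
  have h : (starRingEnd ℂ) ((A * B).trace) = (A * B).trace := by
    have := Matrix.trace_conjTranspose (A * B)
    rw [Matrix.conjTranspose_mul, hA.eq, hB.eq, Matrix.trace_mul_comm] at this
    exact this.symm
  exact (Complex.conj_eq_iff_re.mp h).symm

lemma trace_conjTranspose_mul_self_re_nonneg {n : Type*} [Fintype n]
    (Q : Matrix n n ℂ) : 0 ≤ (Qᴴ * Q).trace.re := by
  rw [Matrix.trace]
  rw [Complex.re_sum]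
  apply Finset.sum_nonneg
  intro j _
  simp only [Matrix.diag_apply, Matrix.mul_apply, Matrix.conjTranspose_apply]
  rw [Complex.re_sum]
  apply Finset.sum_nonneg
  intro i _
  simp only [Complex.star_def, Complex.mul_re, Complex.conj_re, Complex.conj_im]
  nlinarith [sq_nonneg ((Q i j).re), sq_nonneg ((Q i j).im)]

/-- purity bound: trace of square of density matrix at most 1 -/
lemma trace_sq_le_one {n : Type*} [Fintype n] [DecidableEq n] {σ : Matrix n n ℂ}
    (hσ : σ.PosSemidef) (htr : σ.trace = 1) : ((σ * σ).trace).re ≤ 1 := by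
  have hH := hσ.isHermitian
  set U : Matrix n n ℂ := (hH.eigenvectorUnitary : Matrix n n ℂ) with hU
  set D : Matrix n n ℂ := Matrix.diagonal (RCLike.ofReal ∘ hH.eigenvalues) with hD
  have hspec : σ = U * D * star U := hH.spectral_theorem
  have hUU : star U * U = 1 := Matrix.mem_unitaryGroup_iff'.mp hH.eigenvectorUnitary.2
  have hσσ : (σ * σ).trace = (D * D).trace := by
    rw [hspec]
    have : U * D * star U * (U * D * star U) = U * (D * D) * star U := by
      rw [Matrix.mul_assoc (U * D) (star U) (U * D * star U), ← Matrix.mul_assoc (star U) (U*D) (star U),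
        ← Matrix.mul_assoc (star U) U D, hUU, Matrix.one_mul]
      noncomm_ring
    rw [this, Matrix.trace_mul_comm (U * (D*D)) (star U), ← Matrix.mul_assoc, hUU, Matrix.one_mul]
  have htrD : D.trace = σ.trace := by
    rw [hspec, Matrix.trace_mul_comm (U * D) (star U), ← Matrix.mul_assoc, hUU, Matrix.one_mul]
  have hDD : D * D = Matrix.diagonal (fun i => ((hH.eigenvalues i : ℝ) : ℂ) ^ 2) := by
    rw [hD, Matrix.diagonal_mul_diagonal]
    congr 1
    funext i
    simp [sq]
  have hsum1 : ∑ i, hH.eigenvalues i = 1 := by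
    have : D.trace = 1 := htrD.trans htr
    rw [hD, Matrix.trace_diagonal] at this
    have := congrArg Complex.re this
    rw [Complex.re_sum] at this
    simpa using this
  have hev : ∀ i, 0 ≤ hH.eigenvalues i := hσ.eigenvalues_nonneg
  rw [hσσ, hDD, Matrix.trace_diagonal, Complex.re_sum]
  have : ∀ i ∈ Finset.univ, (((hH.eigenvalues i : ℝ) : ℂ) ^ 2).re = (hH.eigenvalues i) ^ 2 := by
    intro i _
    simp [sq, Complex.mul_re]
  rw [Finset.sum_congr rfl this]
  calc ∑ i, hH.eigenvalues i ^ 2 ≤ ∑ i, hH.eigenvalues i * 1 := by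
        apply Finset.sum_le_sum
        intro i _
        rw [sq]
        apply mul_le_mul_of_nonneg_left _ (hev i)
        calc hH.eigenvalues i ≤ ∑ j, hH.eigenvalues j :=
              Finset.single_le_sum (fun j _ => hev j) (Finset.mem_univ i)
          _ = 1 := hsum1
    _ = 1 := by rw [← Finset.sum_mul, hsum1, one_mul]
set_option maxHeartbeats 2000000 in
lemma single_bound (d N M : ℕ) (x : ℝ)
    (E : Fin N → Fin M → Matrix (Fin d) (Fin d) ℂ)
    (hE : IsNMPOVM d N M x E) (hIC : IsInfoComplete d N M)
    (σ : Matrix (Fin d) (Fin d) ℂ) (hσ : IsDensityMatrix σ) :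
    ∑ α, ∑ k, ((E α k * σ).trace.re) ^ 2 ≤
      ((d : ℝ) - 1) / d * (((d : ℝ) ^ 2 + (M : ℝ) ^ 2 * x) / ((M : ℝ) * ((M : ℝ) - 1))) := by
  obtain ⟨hpos, hsumE, htrE, htrEE, htrkl, htrab, hx1, hx2⟩ := hE
  obtain ⟨hσpos, hσtr⟩ := hσ
  -- basic numeric facts
  have hM2 : (2 : ℝ) ≤ (M : ℝ) := by
    match M with
    | 0 => simp at hx1 hx2; linarith
    | 1 =>
      simp at hx1 hx2
      have := hx2.2
      linarith
    | (m+2) => push_cast; linarith [Nat.cast_nonneg (α := ℝ) m]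
  have hd1 : (1 : ℝ) ≤ (d : ℝ) := by
    match d with
    | 0 => simp at hx1 hx2; linarith
    | (m+1) => push_cast; linarith [Nat.cast_nonneg (α := ℝ) m]
  have hMpos : (0 : ℝ) < (M : ℝ) := by linarith
  have hM1 : (0 : ℝ) < (M : ℝ) - 1 := by linarith
  have hdpos : (0 : ℝ) < (d : ℝ) := by linarith
  have hMnat : M ≠ 0 := by rintro rfl; norm_num at hM2
  have hdnat : d ≠ 0 := by rintro rfl; norm_num at hd1
  have hMC : ((M : ℕ) : ℂ) ≠ 0 := Nat.cast_ne_zero.mpr hMnat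
  have hdC : ((d : ℕ) : ℂ) ≠ 0 := Nat.cast_ne_zero.mpr hdnat
  set c : ℝ := ((M : ℝ) ^ 2 * x - d) / ((M : ℝ) * ((M : ℝ) - 1)) with hcdef
  have hnum : (0 : ℝ) < (M : ℝ) ^ 2 * x - d := by
    have := (div_lt_iff₀ (by positivity : (0:ℝ) < (M:ℝ)^2)).mp hx1
    linarith
  have hc : 0 < c := by positivity
  -- the traceless parts
  set F : Fin N → Fin M → Matrix (Fin d) (Fin d) ℂ :=
    fun α k => E α k - (((M : ℝ)⁻¹ : ℝ) : ℂ) • (1 : Matrix (Fin d) (Fin d) ℂ) with hFdef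
  have hermF : ∀ α k, (F α k).IsHermitian := fun α k =>
    ((hpos α k).isHermitian).sub (herm_smul_real _ Matrix.isHermitian_one)
  have hsumF : ∀ α, ∑ k, F α k = 0 := by
    intro α
    rw [hFdef]
    rw [Finset.sum_sub_distrib, hsumE α, Finset.sum_const, Finset.card_univ, Fintype.card_fin,
      sub_eq_zero]
    ext i j
    simp only [Matrix.smul_apply, Matrix.one_apply, smul_ite, smul_zero, Finset.smul_sum]
    rw [nsmul_eq_mul]
    by_cases h : i = j <;> simp [h]
    · exact (div_self hMC).symm
  have gramsub : ∀ (α β : Fin N) (k l : Fin M), (F α k * F β l).trace =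
      (E α k * E β l).trace - (((d : ℝ) / (M : ℝ) ^ 2 : ℝ) : ℂ) := by
    intro α β k l
    rw [hFdef]
    simp only [Matrix.sub_mul, Matrix.mul_sub, smul_mul_assoc, mul_smul_comm,
      Matrix.one_mul, Matrix.mul_one, Matrix.trace_sub, Matrix.trace_smul, smul_eq_mul,
      htrE, Matrix.trace_one, Fintype.card_fin]
    have hMne : ((M : ℝ) : ℂ) ≠ 0 := by
      simp only [ne_eq, Complex.ofReal_eq_zero]; positivity
    push_cast
    field_simp
    ring
  set t : Fin N → Fin M → ℝ := fun α k => ((F α k * σ).trace).re with htdef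
  have htreal : ∀ α k, (F α k * σ).trace = ((t α k : ℝ) : ℂ) := fun α k =>
    trace_mul_herm_real (hermF α k) hσpos.isHermitian
  have hsumtC : ∀ α, ∑ k, ((t α k : ℝ) : ℂ) = 0 := by
    intro α
    have h0 : ∑ k, (F α k * σ).trace = 0 := by
      rw [← Matrix.trace_sum, ← Matrix.sum_mul, hsumF, Matrix.zero_mul, Matrix.trace_zero]
    calc ∑ k, ((t α k : ℝ) : ℂ) = ∑ k, (F α k * σ).trace := by
          exact Finset.sum_congr rfl fun k _ => (htreal α k).symm
      _ = 0 := h0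
  have hsumt : ∀ α, ∑ k, t α k = 0 := by
    intro α
    have := congrArg Complex.re (hsumtC α)
    rw [Complex.re_sum] at this
    simpa using this
  have htE : ∀ α k, (E α k * σ).trace.re = (M : ℝ)⁻¹ + t α k := by
    intro α k
    have h1 : E α k = F α k + (((M : ℝ)⁻¹ : ℝ) : ℂ) • 1 := by simp [hFdef]
    rw [h1, Matrix.add_mul, Matrix.trace_add, smul_mul_assoc, Matrix.one_mul,
      Matrix.trace_smul, hσtr, htreal, smul_eq_mul, mul_one]
    simp [Complex.add_re]
    ring
  -- trace of σ² and σ₀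
  set s2 : ℝ := ((σ * σ).trace).re with hs2def
  have hs2C : (σ * σ).trace = ((s2 : ℝ) : ℂ) :=
    trace_mul_herm_real hσpos.isHermitian hσpos.isHermitian
  set σ₀ : Matrix (Fin d) (Fin d) ℂ := σ - (((d : ℝ)⁻¹ : ℝ) : ℂ) • 1 with hσ₀def
  have hermσ₀ : σ₀.IsHermitian := hσpos.isHermitian.sub (herm_smul_real _ Matrix.isHermitian_one)
  have hσ₀σ₀ : (σ₀ * σ₀).trace = ((s2 - (d : ℝ)⁻¹ : ℝ) : ℂ) := by
    rw [hσ₀def]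
    simp only [Matrix.sub_mul, Matrix.mul_sub, smul_mul_assoc, mul_smul_comm,
      Matrix.one_mul, Matrix.mul_one, Matrix.trace_sub, Matrix.trace_smul, smul_eq_mul,
      hσtr, Matrix.trace_one, Fintype.card_fin, hs2C]
    push_cast
    field_simp
    ring
  have hσ₀F : ∀ α k, (σ₀ * F α k).trace = ((t α k : ℝ) : ℂ) := by
    intro α k
    rw [Matrix.trace_mul_comm, hσ₀def, Matrix.mul_sub, mul_smul_comm, Matrix.mul_one,
      Matrix.trace_sub, Matrix.trace_smul, htreal]
    have : (F α k).trace = 0 := by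
      rw [hFdef]
      simp only [Matrix.trace_sub, Matrix.trace_smul, htrE, Matrix.trace_one,
        Fintype.card_fin, smul_eq_mul]
      have hMne : ((M : ℝ) : ℂ) ≠ 0 := by
        simp only [ne_eq, Complex.ofReal_eq_zero]; positivity
      push_cast
      field_simp
      ring
    rw [this, smul_zero, sub_zero]
  -- the big matrix S and its traces
  set S : Matrix (Fin d) (Fin d) ℂ := ∑ α, ∑ k, ((t α k : ℝ) : ℂ) • F α k with hSdef
  set T : ℝ := ∑ α, ∑ k, (t α k) ^ 2 with hTdef
  have hermS : S.IsHermitian := by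
    apply herm_sum
    intro α _
    apply herm_sum
    intro k _
    exact herm_smul_real _ (hermF α k)
  have hσ₀S : (σ₀ * S).trace = ((T : ℝ) : ℂ) := by
    rw [hSdef, Finset.mul_sum, Matrix.trace_sum]
    rw [hTdef]
    push_cast
    apply Finset.sum_congr rfl
    intro α _
    rw [Finset.mul_sum, Matrix.trace_sum]
    apply Finset.sum_congr rfl
    intro k _
    rw [mul_smul_comm, Matrix.trace_smul, hσ₀F, smul_eq_mul, sq]
  have hSσ₀ : (S * σ₀).trace = ((T : ℝ) : ℂ) := by
    rw [Matrix.trace_mul_comm]; exact hσ₀S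
  -- Gram values
  have gram0 : ∀ α β k l, α ≠ β → (F α k * F β l).trace = 0 := by
    intro α β k l hab
    rw [gramsub, htrab α β k l hab]
    push_cast
    ring
  have gram1 : ∀ α k, (F α k * F α k).trace = ((x - (d : ℝ) / (M : ℝ) ^ 2 : ℝ) : ℂ) := by
    intro α k
    rw [gramsub, htrEE]
    push_cast
    ring
  set g2 : ℝ := ((d : ℝ) - M * x) / (M * ((M : ℝ) - 1)) - (d : ℝ) / (M : ℝ) ^ 2 with hg2def
  have gram2 : ∀ α k l, k ≠ l → (F α k * F α l).trace = ((g2 : ℝ) : ℂ) := by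
    intro α k l hkl
    rw [gramsub, htrkl α k l hkl, hg2def]
    push_cast
    ring
  have hg1g2 : x - (d : ℝ) / (M : ℝ) ^ 2 - g2 = c := by
    rw [hg2def, hcdef]
    field_simp
    ring
  have hkl : ∀ α k l, (F α k * F α l).trace =
      ((g2 : ℝ) : ℂ) + (if k = l then ((c : ℝ) : ℂ) else 0) := by
    intro α k l
    by_cases h : k = l
    · subst h
      rw [gram1, if_pos rfl, ← hg1g2]
      push_cast
      ring
    · rw [gram2 α k l h, if_neg h, add_zero]
  have hSS : (S * S).trace = ((c * T : ℝ) : ℂ) := by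
    have hexp : (S * S).trace =
        ∑ α, ∑ k, ∑ β, ∑ l, ((t α k : ℝ) : ℂ) * ((t β l : ℝ) : ℂ) * (F α k * F β l).trace := by
      rw [hSdef, Matrix.sum_mul, Matrix.trace_sum]
      apply Finset.sum_congr rfl; intro α _
      rw [Matrix.sum_mul, Matrix.trace_sum]
      apply Finset.sum_congr rfl; intro k _
      rw [smul_mul_assoc, Finset.mul_sum, Matrix.trace_smul, Matrix.trace_sum, Finset.smul_sum]
      apply Finset.sum_congr rfl; intro β _
      rw [Finset.mul_sum, Matrix.trace_sum, Finset.smul_sum]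
      apply Finset.sum_congr rfl; intro l _
      rw [mul_smul_comm, Matrix.trace_smul, smul_eq_mul, smul_eq_mul]
      ring
    rw [hexp]
    have hinner : ∀ α k, ∑ β, ∑ l, ((t α k : ℝ) : ℂ) * ((t β l : ℝ) : ℂ) * (F α k * F β l).trace
        = ((c * (t α k) ^ 2 : ℝ) : ℂ) := by
      intro α k
      rw [Finset.sum_eq_single α]
      · have : ∀ l, ((t α k : ℝ) : ℂ) * ((t α l : ℝ) : ℂ) * (F α k * F α l).trace
            = ((t α k : ℝ) : ℂ) * ((t α l : ℝ) : ℂ) * ((g2 : ℝ) : ℂ)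
              + (if k = l then ((t α k : ℝ) : ℂ) * ((t α l : ℝ) : ℂ) * ((c : ℝ) : ℂ) else 0) := by
          intro l
          rw [hkl α k l]
          by_cases h : k = l <;> simp [h] <;> ring
        rw [Finset.sum_congr rfl (fun l _ => this l), Finset.sum_add_distrib]
        rw [Finset.sum_ite_eq Finset.univ k
          (fun l => ((t α k : ℝ) : ℂ) * ((t α l : ℝ) : ℂ) * ((c : ℝ) : ℂ))]
        rw [if_pos (Finset.mem_univ k)]
        have hz : ∑ l, ((t α k : ℝ) : ℂ) * ((t α l : ℝ) : ℂ) * ((g2 : ℝ) : ℂ) = 0 := by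
          rw [← Finset.sum_mul, ← Finset.mul_sum, hsumtC, mul_zero, zero_mul]
        rw [hz, zero_add]
        push_cast
        ring
      · intro β _ hβα
        apply Finset.sum_eq_zero
        intro l _
        rw [gram0 α β k l (Ne.symm hβα), mul_zero]
      · intro h
        exact absurd (Finset.mem_univ α) h
    rw [Finset.sum_congr rfl (fun α _ => Finset.sum_congr rfl (fun k _ => hinner α k))]
    rw [hTdef]
    push_cast
    rw [Finset.mul_sum]
    apply Finset.sum_congr rfl
    intro α _
    rw [Finset.mul_sum]
  -- the key inequality via 0 ≤ tr(QᴴQ)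
  set Q : Matrix (Fin d) (Fin d) ℂ := ((c : ℝ) : ℂ) • σ₀ - S with hQdef
  have hermQ : Q.IsHermitian := (herm_smul_real _ hermσ₀).sub hermS
  have hQQ : (Qᴴ * Q).trace = ((c ^ 2 * (s2 - (d : ℝ)⁻¹) - c * T : ℝ) : ℂ) := by
    rw [hermQ.eq, hQdef]
    simp only [Matrix.sub_mul, Matrix.mul_sub, smul_mul_assoc, mul_smul_comm,
      Matrix.trace_sub, Matrix.trace_smul, smul_eq_mul, hσ₀σ₀, hσ₀S, hSσ₀, hSS]
    push_cast
    ring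
  have hkey : 0 ≤ c ^ 2 * (s2 - (d : ℝ)⁻¹) - c * T := by
    have h0 := trace_conjTranspose_mul_self_re_nonneg Q
    rw [hQQ, Complex.ofReal_re] at h0
    exact h0
  have hs2le : s2 ≤ 1 := trace_sq_le_one hσpos hσtr
  have hT : T ≤ c * (1 - (d : ℝ)⁻¹) := by
    have h1 : c * T ≤ c ^ 2 * (s2 - (d : ℝ)⁻¹) := by linarith
    have h2 : c ^ 2 * (s2 - (d : ℝ)⁻¹) ≤ c ^ 2 * (1 - (d : ℝ)⁻¹) := by
      apply mul_le_mul_of_nonneg_left _ (sq_nonneg c)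
      linarith
    have h3 : c * T ≤ c * (c * (1 - (d : ℝ)⁻¹)) := by nlinarith
    exact le_of_mul_le_mul_left h3 hc
  -- final computation
  have hLHS : ∑ α, ∑ k, ((E α k * σ).trace.re) ^ 2 = (N : ℝ) * (M : ℝ)⁻¹ + T := by
    have hterm : ∀ α, ∑ k, ((E α k * σ).trace.re) ^ 2
        = (M : ℝ) * (M : ℝ)⁻¹ ^ 2 + ∑ k, (t α k) ^ 2 := by
      intro α
      have h1 : ∀ k ∈ Finset.univ, ((E α k * σ).trace.re) ^ 2 =
          (M : ℝ)⁻¹ ^ 2 + (2 * (M : ℝ)⁻¹ * t α k + (t α k) ^ 2) := fun k _ => by rw [htE]; ring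
      rw [Finset.sum_congr rfl h1, Finset.sum_add_distrib, Finset.sum_add_distrib,
        Finset.sum_const, Finset.card_univ, Fintype.card_fin, ← Finset.mul_sum, hsumt,
        mul_zero, zero_add, nsmul_eq_mul]
    have hMM : (M : ℝ) * (M : ℝ)⁻¹ ^ 2 = (M : ℝ)⁻¹ := by
      field_simp
    rw [Finset.sum_congr rfl (fun α _ => hterm α), Finset.sum_add_distrib,
      Finset.sum_const, Finset.card_univ, Fintype.card_fin, nsmul_eq_mul, hMM, ← hTdef]
  have hN : ((M : ℝ) - 1) * N = (d : ℝ) ^ 2 - 1 := hIC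
  have hBeq : (N : ℝ) * (M : ℝ)⁻¹ + c * (1 - (d : ℝ)⁻¹) =
      ((d : ℝ) - 1) / d * (((d : ℝ) ^ 2 + (M : ℝ) ^ 2 * x) / ((M : ℝ) * ((M : ℝ) - 1))) := by
    have hMne : (M : ℝ) ≠ 0 := ne_of_gt hMpos
    have hM1ne : (M : ℝ) - 1 ≠ 0 := ne_of_gt hM1
    have hdne : (d : ℝ) ≠ 0 := ne_of_gt hdpos
    have hNval : (N : ℝ) = ((d : ℝ) ^ 2 - 1) / ((M : ℝ) - 1) := by
      rw [eq_div_iff hM1ne]; linarith [hN]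
    rw [hcdef, hNval]
    field_simp
    ring
  rw [hLHS, ← hBeq]
  linarith

lemma famKron_mul {nn : ℕ} {d : Fin nn → ℕ}
    (A B : ∀ i, Matrix (Fin (d i)) (Fin (d i)) ℂ) :
    famKron A * famKron B = famKron (fun i => A i * B i) := by
  ext f g
  simp only [famKron, Matrix.mul_apply, Matrix.of_apply]
  have hdist : ∀ hh : ∀ i, Fin (d i), (∏ i, A i (f i) (hh i)) * ∏ i, B i (hh i) (g i)
      = ∏ i, A i (f i) (hh i) * B i (hh i) (g i) := fun hh =>
    Finset.prod_mul_distrib.symm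
  rw [Finset.sum_congr rfl (fun hh _ => hdist hh), ← Fintype.piFinset_univ]
  exact (Finset.prod_univ_sum (fun i => (Finset.univ : Finset (Fin (d i))))
    (fun i j => A i (f i) j * B i j (g i))).symm

lemma trace_famKron {nn : ℕ} {d : Fin nn → ℕ}
    (A : ∀ i, Matrix (Fin (d i)) (Fin (d i)) ℂ) :
    (famKron A).trace = ∏ i, (A i).trace := by
  simp only [Matrix.trace, Matrix.diag, famKron, Matrix.of_apply]
  rw [← Fintype.piFinset_univ]
  exact (Finset.prod_univ_sum (fun i => (Finset.univ : Finset (Fin (d i))))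
    (fun i j => A i j j)).symm

/-- exchange of sums and products over pi types, for real numbers -/
lemma sum_pi_prod {nn : ℕ} {N : Fin nn → ℕ} (f : ∀ i, Fin (N i) → ℝ) :
    ∑ α : ∀ i, Fin (N i), ∏ i, f i (α i) = ∏ i, ∑ a, f i a := by
  rw [Finset.prod_univ_sum, Fintype.piFinset_univ]


/-- for a fully separable n-partite state and informationally
complete (N_{A_q},M_{A_q})-POVMs on each subsystem,
Σ (tr((E^{A_1}_{α_1,k_1} ⊗ ⋯ ⊗ E^{A_n}_{α_n,k_n}) ρ))² ≤
∏_i ((d_{A_i}−1)/d_{A_i})·(d_{A_i}² + M_{A_i}² x_{A_i})/(M_{A_i}(M_{A_i}−1)). -/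
theorem multipartite_coincidence_bound
    (nn : ℕ) (d N M : Fin nn → ℕ) (x : Fin nn → ℝ)
    (E : ∀ i, Fin (N i) → Fin (M i) → Matrix (Fin (d i)) (Fin (d i)) ℂ)
    (hE : ∀ i, IsNMPOVM (d i) (N i) (M i) (x i) (E i))
    (hIC : ∀ i, IsInfoComplete (d i) (N i) (M i))
    (ρ : Matrix (∀ i, Fin (d i)) (∀ i, Fin (d i)) ℂ)
    (hρ : IsDensityMatrix ρ) (hsep : FullySeparable ρ) :
    ∑ α : ∀ i, Fin (N i), ∑ k : ∀ i, Fin (M i),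
        ((famKron (fun i => E i (α i) (k i)) * ρ).trace.re) ^ 2 ≤
      ∏ i, ((d i : ℝ) - 1) / (d i) *
        (((d i : ℝ) ^ 2 + (M i : ℝ) ^ 2 * x i) / ((M i : ℝ) * ((M i : ℝ) - 1))) := by
  obtain ⟨K, p, ρs, hp, hpsum, hρs, hρeq⟩ := hsep
  -- the trace factorizes over product states
  have key : ∀ (α : ∀ i, Fin (N i)) (k : ∀ i, Fin (M i)),
      (famKron (fun i => E i (α i) (k i)) * ρ).trace.re =
        ∑ j, p j * ∏ i, ((E i (α i) (k i) * ρs j i).trace.re) := by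
    intro α k
    rw [hρeq, Finset.mul_sum, Matrix.trace_sum, Complex.re_sum]
    apply Finset.sum_congr rfl
    intro j _
    rw [mul_smul_comm, Matrix.trace_smul, famKron_mul, trace_famKron]
    have hfac : ∀ i ∈ Finset.univ, (E i (α i) (k i) * ρs j i).trace =
        (((E i (α i) (k i) * ρs j i).trace.re : ℝ) : ℂ) := fun i _ =>
      trace_mul_herm_real ((hE i).1 (α i) (k i)).isHermitian ((hρs j i).1).isHermitian
    rw [Finset.prod_congr rfl hfac, ← Complex.ofReal_prod, smul_eq_mul,
      ← Complex.ofReal_mul, Complex.ofReal_re]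
  -- Jensen / Cauchy-Schwarz in j
  have jensen : ∀ (α : ∀ i, Fin (N i)) (k : ∀ i, Fin (M i)),
      ((famKron (fun i => E i (α i) (k i)) * ρ).trace.re) ^ 2 ≤
        ∑ j, p j * (∏ i, ((E i (α i) (k i) * ρs j i).trace.re)) ^ 2 := by
    intro α k
    rw [key α k]
    have hcs := Finset.sum_mul_sq_le_sq_mul_sq Finset.univ (fun j => Real.sqrt (p j))
      (fun j => Real.sqrt (p j) * ∏ i, ((E i (α i) (k i) * ρs j i).trace.re))
    have h1 : ∀ j ∈ Finset.univ, Real.sqrt (p j) *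
        (Real.sqrt (p j) * ∏ i, ((E i (α i) (k i) * ρs j i).trace.re)) =
        p j * ∏ i, ((E i (α i) (k i) * ρs j i).trace.re) := by
      intro j _
      rw [← mul_assoc, Real.mul_self_sqrt (hp j)]
    have h2 : ∀ j ∈ Finset.univ, Real.sqrt (p j) ^ 2 = p j := fun j _ =>
      Real.sq_sqrt (hp j)
    have h3 : ∀ j ∈ Finset.univ, (Real.sqrt (p j) * ∏ i, ((E i (α i) (k i) * ρs j i).trace.re)) ^ 2
        = p j * (∏ i, ((E i (α i) (k i) * ρs j i).trace.re)) ^ 2 := by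
      intro j _
      rw [mul_pow, Real.sq_sqrt (hp j)]
    rw [Finset.sum_congr rfl h1, Finset.sum_congr rfl h2, Finset.sum_congr rfl h3, hpsum,
      one_mul] at hcs
    exact hcs
  -- sum the bound
  calc ∑ α : ∀ i, Fin (N i), ∑ k : ∀ i, Fin (M i),
        ((famKron (fun i => E i (α i) (k i)) * ρ).trace.re) ^ 2
      ≤ ∑ α : ∀ i, Fin (N i), ∑ k : ∀ i, Fin (M i),
        ∑ j, p j * (∏ i, ((E i (α i) (k i) * ρs j i).trace.re)) ^ 2 := by
        apply Finset.sum_le_sum; intro α _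
        apply Finset.sum_le_sum; intro k _
        exact jensen α k
    _ = ∑ α : ∀ i, Fin (N i), ∑ j, ∑ k : ∀ i, Fin (M i),
        p j * (∏ i, ((E i (α i) (k i) * ρs j i).trace.re)) ^ 2 :=
        Finset.sum_congr rfl (fun α _ => Finset.sum_comm)
    _ = ∑ j, ∑ α : ∀ i, Fin (N i), ∑ k : ∀ i, Fin (M i),
        p j * (∏ i, ((E i (α i) (k i) * ρs j i).trace.re)) ^ 2 :=
        Finset.sum_comm
    _ = ∑ j, p j * ∑ α : ∀ i, Fin (N i), ∑ k : ∀ i, Fin (M i),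
        ∏ i, ((E i (α i) (k i) * ρs j i).trace.re) ^ 2 := by
        apply Finset.sum_congr rfl; intro j _
        rw [Finset.mul_sum]
        apply Finset.sum_congr rfl; intro α _
        rw [Finset.mul_sum]
        apply Finset.sum_congr rfl; intro k _
        rw [Finset.prod_pow]
    _ = ∑ j, p j * ∏ i, ∑ a, ∑ b, ((E i a b * ρs j i).trace.re) ^ 2 := by
        apply Finset.sum_congr rfl; intro j _
        congr 1
        calc ∑ α : ∀ i, Fin (N i), ∑ k : ∀ i, Fin (M i),
              ∏ i, ((E i (α i) (k i) * ρs j i).trace.re) ^ 2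
            = ∑ α : ∀ i, Fin (N i), ∏ i, ∑ b, ((E i (α i) b * ρs j i).trace.re) ^ 2 :=
              Finset.sum_congr rfl (fun α _ =>
                sum_pi_prod (fun i b => ((E i (α i) b * ρs j i).trace.re) ^ 2))
          _ = ∏ i, ∑ a, ∑ b, ((E i a b * ρs j i).trace.re) ^ 2 :=
              sum_pi_prod (fun i a => ∑ b, ((E i a b * ρs j i).trace.re) ^ 2)
    _ ≤ ∑ j, p j * ∏ i, ((d i : ℝ) - 1) / (d i) *
        (((d i : ℝ) ^ 2 + (M i : ℝ) ^ 2 * x i) / ((M i : ℝ) * ((M i : ℝ) - 1))) := by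
        apply Finset.sum_le_sum; intro j _
        apply mul_le_mul_of_nonneg_left _ (hp j)
        apply Finset.prod_le_prod
        · intro i _
          positivity
        · intro i _
          exact single_bound (d i) (N i) (M i) (x i) (E i) (hE i) (hIC i) (ρs j i) (hρs j i)
    _ = ∏ i, ((d i : ℝ) - 1) / (d i) *
        (((d i : ℝ) ^ 2 + (M i : ℝ) ^ 2 * x i) / ((M i : ℝ) * ((M i : ℝ) - 1))) := by
        rw [← Finset.sum_mul, hpsum, one_mul]
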